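/- (Margin update, case j < m) In the setting of the routing achievability proof: after reducing rate L_M by N/(|X_M|-1), reducing source capacity C_0 by N/(|X_M|-1), and reducing each capacity C_i for p_i ∈ X_1 \ X_m by C_{iM} (where Σ_{p_i ∈ X_1\X_m} C_{iM} = |X_M| N/(|X_M|-1)), the updated margin for any j < m equals N_j' = N_j - N + Σ_{p_i ∈ X_j \ X_m} C_{iM}. In particular, if Σ_{p_i ∈ X_j \ X_m} C_{iM} ≤ N - N_j, then N_j' ≤ 0. -/

import Mathlib

/-- Margin update for `j < m` in the routing achievability proof. After
reducing rate `L M` and source capacity `C p0` by `Nv / (|X M| - 1)` and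
reducing each capacity `C p` for `p ∈ X 1 \ X m` by `CM p` (with
`∑_{p ∈ X 1 \ X m} CM p = |X M| * Nv / (|X M| - 1)`), the updated margin for
`j < m` equals `N j - Nv + ∑_{p ∈ X j \ X m} CM p`; in particular it is `≤ 0`
whenever `∑_{p ∈ X j \ X m} CM p ≤ Nv - N j`. -/
theorem stmt_9 {α : Type*} [DecidableEq α] (n : ℕ) (hn : 1 ≤ n) (p0 : α)
    (X : ℕ → Finset α) (hXtop : X (n + 1) = {p0})
    (hnested : ∀ j, 1 ≤ j → j ≤ n → X (j + 1) ⊆ X j)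
    (hp0 : ∀ j, 1 ≤ j → j ≤ n + 1 → p0 ∈ X j)
    (C : α → ℝ) (L : ℕ → ℝ)
    (N : ℕ → ℝ)
    (hNdef : ∀ j, 1 ≤ j → j ≤ n →
      N j = (∑ i ∈ Finset.Icc j n, ((X i).card : ℝ) * L i)
            + (∑ i ∈ Finset.Icc 1 (j - 1), L i) - ∑ p ∈ X j, C p)
    (m M : ℕ) (hm1 : 1 ≤ m) (hmM : m ≤ M) (hMn : M ≤ n)
    (hcardM : 2 ≤ (X M).card)
    (Nv : ℝ) (hNv : 0 < Nv)
    (CM : α → ℝ) (hCM0 : ∀ p ∈ X 1 \ X m, 0 ≤ CM p)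
    (hCMsum : ∑ p ∈ X 1 \ X m, CM p = ((X M).card : ℝ) * Nv / (((X M).card : ℝ) - 1))
    (C' : α → ℝ) (L' : ℕ → ℝ)
    (hC'p0 : C' p0 = C p0 - Nv / (((X M).card : ℝ) - 1))
    (hC'in : ∀ p ∈ X m, p ≠ p0 → C' p = C p)
    (hC'out : ∀ p ∈ X 1, p ∉ X m → C' p = C p - CM p)
    (hL'M : L' M = L M - Nv / (((X M).card : ℝ) - 1))
    (hL'other : ∀ i, i ≠ M → L' i = L i)
    (j : ℕ) (hj1 : 1 ≤ j) (hjm : j < m) :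
    ((∑ i ∈ Finset.Icc j n, ((X i).card : ℝ) * L' i)
      + (∑ i ∈ Finset.Icc 1 (j - 1), L' i) - ∑ p ∈ X j, C' p)
      = N j - Nv + ∑ p ∈ X j \ X m, CM p ∧
    ((∑ p ∈ X j \ X m, CM p ≤ Nv - N j) →
      ((∑ i ∈ Finset.Icc j n, ((X i).card : ℝ) * L' i)
        + (∑ i ∈ Finset.Icc 1 (j - 1), L' i) - ∑ p ∈ X j, C' p) ≤ 0) := by

  have hjn : j ≤ n := le_trans (le_of_lt (lt_of_lt_of_le hjm hmM)) hMn
  have hsub : ∀ a b, 1 ≤ a → a ≤ b → b ≤ n + 1 → X b ⊆ X a := by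
    intro a b ha hab hbn
    induction b with
    | zero => omega
    | succ k ih =>
      rcases Nat.eq_or_lt_of_le hab with h | h
      · rw [h]
      · have hk : a ≤ k := Nat.lt_succ_iff.mp h
        exact (hnested k (le_trans ha hk) (Nat.succ_le_succ_iff.mp hbn)).trans
          (ih hk (le_trans (Nat.le_succ k) hbn))
  have hXmXj : X m ⊆ X j := hsub j m hj1 (le_of_lt hjm) (by omega)
  have hXjX1 : X j ⊆ X 1 := hsub 1 j le_rfl hj1 (by omega)
  have hd : ((X M).card : ℝ) - 1 ≠ 0 := by
    have : (2 : ℝ) ≤ ((X M).card : ℝ) := by exact_mod_cast hcardM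
    linarith
  have hMmem : M ∈ Finset.Icc j n := Finset.mem_Icc.mpr ⟨by omega, hMn⟩
  have hS1 : ∑ i ∈ Finset.Icc j n, ((X i).card : ℝ) * L' i
      = (∑ i ∈ Finset.Icc j n, ((X i).card : ℝ) * L i)
        - ((X M).card : ℝ) * (Nv / (((X M).card : ℝ) - 1)) := by
    have h1 : ∑ i ∈ Finset.Icc j n, ((X i).card : ℝ) * L' i
        = ∑ i ∈ Finset.Icc j n, (((X i).card : ℝ) * L i +
            (if i = M then -(((X M).card : ℝ) * (Nv / (((X M).card : ℝ) - 1))) else 0)) := by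
      refine Finset.sum_congr rfl fun i hi => ?_
      by_cases h : i = M
      · subst h; rw [hL'M, if_pos rfl]; ring
      · rw [hL'other i h, if_neg h]; ring
    rw [h1, Finset.sum_add_distrib, Finset.sum_ite_eq' (Finset.Icc j n) M, if_pos hMmem]
    ring
  have hS2 : ∑ i ∈ Finset.Icc 1 (j - 1), L' i = ∑ i ∈ Finset.Icc 1 (j - 1), L i := by
    refine Finset.sum_congr rfl fun i hi => ?_
    have := Finset.mem_Icc.mp hi
    exact hL'other i (by omega)
  have hS3 : ∑ p ∈ X j, C' p
      = (∑ p ∈ X j, C p) - Nv / (((X M).card : ℝ) - 1) - ∑ p ∈ X j \ X m, CM p := by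
    have hsplit : (∑ p ∈ X j \ X m, C' p) + (∑ p ∈ X m, C' p) = ∑ p ∈ X j, C' p :=
      Finset.sum_sdiff hXmXj
    have hsplit' : (∑ p ∈ X j \ X m, C p) + (∑ p ∈ X m, C p) = ∑ p ∈ X j, C p :=
      Finset.sum_sdiff hXmXj
    have hout : ∑ p ∈ X j \ X m, C' p
        = (∑ p ∈ X j \ X m, C p) - ∑ p ∈ X j \ X m, CM p := by
      rw [← Finset.sum_sub_distrib]
      refine Finset.sum_congr rfl fun p hp => ?_
      obtain ⟨hp1, hp2⟩ := Finset.mem_sdiff.mp hp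
      exact hC'out p (hXjX1 hp1) hp2
    have hin : ∑ p ∈ X m, C' p = (∑ p ∈ X m, C p) - Nv / (((X M).card : ℝ) - 1) := by
      have hp0m : p0 ∈ X m := hp0 m hm1 (by omega)
      have h1 : ∑ p ∈ X m, C' p
          = ∑ p ∈ X m, (C p + (if p = p0 then -(Nv / (((X M).card : ℝ) - 1)) else 0)) := by
        refine Finset.sum_congr rfl fun p hp => ?_
        by_cases h : p = p0
        · subst h; rw [hC'p0, if_pos rfl]; ring
        · rw [hC'in p hp h, if_neg h]; ring
      rw [h1, Finset.sum_add_distrib, Finset.sum_ite_eq' (X m) p0, if_pos hp0m]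
      ring
    have := hsplit
    rw [hout, hin] at this
    linarith
  have hNj := hNdef j hj1 hjn
  have key : ((∑ i ∈ Finset.Icc j n, ((X i).card : ℝ) * L' i)
      + (∑ i ∈ Finset.Icc 1 (j - 1), L' i) - ∑ p ∈ X j, C' p)
      = N j - Nv + ∑ p ∈ X j \ X m, CM p := by
    rw [hS1, hS2, hS3, hNj]
    have : ((X M).card : ℝ) * (Nv / (((X M).card : ℝ) - 1))
        - Nv / (((X M).card : ℝ) - 1) = Nv := by
      field_simp
    linarith
  exact ⟨key, fun h => by rw [key]; linarith⟩
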